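/- If u − v is coprime to N, then the absolute value of the cross-correlation of two Zadoff–Chu sequences with roots u and v equals √N for every lag τ: |Σ_{n=0}^{N-1} x_u[n]·conj(x_v[n+τ])| = √N. -/

import Mathlib

open Complex Finset

private noncomputable def zce (N : ℕ) (j : ℤ) : ℂ :=
  Complex.exp (-((Real.pi : ℂ) * (j : ℂ) / N) * Complex.I)

private lemma zce_def (N : ℕ) (j : ℤ) :
    zce N j = Complex.exp (-((Real.pi : ℂ) * (j : ℂ) / N) * Complex.I) := rfl

private lemma zce_add (N : ℕ) (hN0 : (N : ℂ) ≠ 0) (j k : ℤ) :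
    zce N (j + k) = zce N j * zce N k := by
  rw [zce_def, zce_def, zce_def, ← Complex.exp_add]
  congr 1
  push_cast
  field_simp
  ring

private lemma zce_zero (N : ℕ) : zce N 0 = 1 := by simp [zce_def]

private lemma zce_two_N (N : ℕ) (hN0 : (N : ℂ) ≠ 0) (k : ℤ) : zce N (2 * N * k) = 1 := by
  rw [zce_def]
  have h : -((Real.pi : ℂ) * ((2 * (N:ℤ) * k : ℤ) : ℂ) / N) * Complex.I
      = (-k : ℤ) * (2 * (Real.pi : ℂ) * Complex.I) := by
    push_cast
    field_simp
  rw [h, Complex.exp_int_mul_two_pi_mul_I]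

private lemma zce_congr (N : ℕ) (hN0 : (N : ℂ) ≠ 0) (j k : ℤ)
    (h : (2 * (N : ℤ)) ∣ (j - k)) : zce N j = zce N k := by
  obtain ⟨t, ht⟩ := h
  have hj : j = k + 2 * N * t := by linarith
  rw [hj, zce_add N hN0, zce_two_N N hN0, mul_one]

private lemma zce_conj (N : ℕ) (j : ℤ) : (starRingEnd ℂ) (zce N j) = zce N (-j) := by
  rw [zce_def, zce_def, ← Complex.exp_conj]
  congr 1
  simp only [map_mul, map_div₀, map_neg, Complex.conj_ofReal, Complex.conj_I,
    map_intCast, map_natCast]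
  push_cast
  ring

private lemma zce_pow (N : ℕ) (j : ℤ) (m : ℕ) : zce N (j * m) = (zce N j) ^ m := by
  rw [zce_def, zce_def, ← Complex.exp_nat_mul]
  congr 1
  push_cast
  ring

private lemma zce_ne_one (N : ℕ) (hN : 1 ≤ N) (j : ℤ)
    (h : ¬ (2 * (N : ℤ)) ∣ j) : zce N j ≠ 1 := by
  have hNR0 : (N : ℝ) ≠ 0 := Nat.cast_ne_zero.mpr (by omega)
  intro hω
  rw [zce_def, Complex.exp_eq_one_iff] at hω
  obtain ⟨k, hk⟩ := hω
  have h1 : (-((Real.pi : ℂ) * (j : ℂ) / N) : ℂ) = (k : ℂ) * (2 * (Real.pi : ℂ)) :=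
    mul_right_cancel₀ Complex.I_ne_zero (by rw [hk]; ring)
  have h2 : -(Real.pi * (j : ℝ) / N) = (k : ℝ) * (2 * Real.pi) := by
    exact_mod_cast h1
  have h3 : Real.pi * (j : ℝ) = Real.pi * (((-2) * k * N : ℤ) : ℝ) := by
    push_cast
    field_simp at h2
    linear_combination (-Real.pi) * h2
  have h4 : (j : ℝ) = (((-2) * k * N : ℤ) : ℝ) :=
    mul_left_cancel₀ Real.pi_ne_zero h3
  have h5 : j = (-2) * k * N := by exact_mod_cast h4
  exact h ⟨-k, by linarith⟩

private lemma zc_sum_step (M : ℕ) (h : ℤ → ℂ) (hper : ∀ n : ℤ, h (n + M) = h n) (m : ℤ) :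
    ∑ n ∈ range M, h ((n : ℤ) + (m + 1)) = ∑ n ∈ range M, h ((n : ℤ) + m) := by
  have key : ∑ n ∈ range M, h ((n : ℤ) + (m + 1))
      = ∑ n ∈ range M, (fun k : ℕ => h ((k : ℤ) + m)) (n + 1) := by
    refine Finset.sum_congr rfl fun n _ => ?_
    push_cast
    ring_nf
  have hM0 : (fun k : ℕ => h ((k : ℤ) + m)) M = (fun k : ℕ => h ((k : ℤ) + m)) 0 := by
    simp only
    rw [show ((M : ℤ) + m) = m + M by ring, hper]
    norm_num
  have h1 := Finset.sum_range_succ' (fun k : ℕ => h ((k : ℤ) + m)) M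
  have h2 := Finset.sum_range_succ (fun k : ℕ => h ((k : ℤ) + m)) M
  rw [key]
  have h3 : (∑ n ∈ range M, (fun k : ℕ => h ((k : ℤ) + m)) (n + 1))
      + (fun k : ℕ => h ((k : ℤ) + m)) 0
      = (∑ n ∈ range M, (fun k : ℕ => h ((k : ℤ) + m)) n)
      + (fun k : ℕ => h ((k : ℤ) + m)) M := by
    rw [← h1, h2]
  rw [hM0] at h3
  exact add_right_cancel h3

private lemma zc_sum_shift (M : ℕ) (h : ℤ → ℂ) (hper : ∀ n : ℤ, h (n + M) = h n) (m : ℤ) :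
    ∑ n ∈ range M, h ((n : ℤ) + m) = ∑ n ∈ range M, h (n : ℤ) := by
  induction m using Int.induction_on with
  | zero => simp
  | succ k ih => rw [zc_sum_step M h hper k, ih]
  | pred k ih =>
      have hstep := zc_sum_step M h hper (-((k:ℤ) + 1))
      rw [show (-(k:ℤ) - 1 : ℤ) = -((k:ℤ)+1) by ring, ← hstep,
        show (-((k:ℤ)+1) + 1 : ℤ) = -(k:ℤ) by ring, ih]

private def zcP (u v qu qv c τ : ℤ) (n : ℤ) : ℤ :=
  u * n * (n + c + 2 * qu) - v * (n + τ) * (n + τ + c + 2 * qv)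

theorem zc_crosscorr_abs (N : ℕ) (hN : 1 ≤ N) (u v qu qv c : ℤ)
    (huv : Int.gcd (u - v) (N : ℤ) = 1) (hc : c % 2 = (N : ℤ) % 2) (τ : ℤ)
    (xu xv : ℤ → ℂ)
    (hxu : ∀ n : ℤ, xu n =
      Complex.exp (-((Real.pi : ℂ) * u * (n : ℂ) * ((n : ℂ) + c + 2 * qu) / N) * Complex.I))
    (hxv : ∀ n : ℤ, xv n =
      Complex.exp (-((Real.pi : ℂ) * v * (n : ℂ) * ((n : ℂ) + c + 2 * qv) / N) * Complex.I)) :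
    ‖(∑ n ∈ Finset.range N, xu n * (starRingEnd ℂ) (xv (n + τ)))‖
      = Real.sqrt N := by
  have hN0 : (N : ℂ) ≠ 0 := Nat.cast_ne_zero.mpr (by omega)
  set P : ℤ → ℤ := zcP u v qu qv c τ with hP
  set B : ℤ := u * qu - v * qv - v * τ with hB
  have hf : ∀ n : ℤ, xu n * (starRingEnd ℂ) (xv (n + τ)) = zce N (P n) := by
    intro n
    rw [hxu, hxv, zce_def, ← Complex.exp_conj, ← Complex.exp_add]
    congr 1
    simp only [map_mul, map_div₀, map_neg, Complex.conj_ofReal, Complex.conj_I,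
      map_intCast, map_natCast, map_ofNat, map_add]
    push_cast [hP, zcP]
    field_simp
    ring
  set S : ℂ := ∑ n ∈ Finset.range N, xu n * (starRingEnd ℂ) (xv (n + τ)) with hS
  have hSe : S = ∑ n ∈ range N, zce N (P n) :=
    Finset.sum_congr rfl fun n _ => hf n
  have hPper : ∀ n : ℤ, (2 * (N : ℤ)) ∣ (P (n + N) - P n) := by
    intro n
    obtain ⟨s, hs⟩ : (2 : ℤ) ∣ ((N : ℤ) + c) := by omega
    refine ⟨(u - v) * n + (u - v) * s + B, ?_⟩
    simp only [hP, zcP, hB]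
    linear_combination ((N : ℤ) * (u - v)) * hs
  have hkey : ∀ d m : ℤ, P (d + m) - P m
      = 2 * (u - v) * d * m + d * ((u - v) * (d + c) + 2 * B) := by
    intro d m
    simp only [hP, zcP, hB]
    ring
  have hmain : S * (starRingEnd ℂ) S = (N : ℂ) := by
    rw [hSe, map_sum]
    have h1 : (∑ n ∈ range N, zce N (P n)) * ∑ m ∈ range N, (starRingEnd ℂ) (zce N (P m))
        = ∑ m ∈ range N, ∑ n ∈ range N, zce N (P n - P m) := by
      rw [Finset.sum_mul_sum, Finset.sum_comm]
      refine Finset.sum_congr rfl fun m _ => Finset.sum_congr rfl fun n _ => ?_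
      rw [zce_conj, ← zce_add N hN0, sub_eq_add_neg]
    rw [h1]
    have hshift : ∀ m : ℕ, ∑ n ∈ range N, zce N (P n - P m)
        = ∑ d ∈ range N, zce N (P ((d : ℤ) + m) - P m) := by
      intro m
      refine (zc_sum_shift N (fun n => zce N (P n - P (m : ℤ))) (fun n => ?_) (m : ℤ)).symm
      refine zce_congr N hN0 _ _ ?_
      have h2 : P (n + N) - P m - (P n - P m) = P (n + N) - P n := by ring
      rw [h2]
      exact hPper n
    calc ∑ m ∈ range N, ∑ n ∈ range N, zce N (P n - P m)
        = ∑ m ∈ range N, ∑ d ∈ range N, zce N (P ((d:ℤ) + m) - P m) :=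
          Finset.sum_congr rfl fun m _ => hshift m
      _ = ∑ d ∈ range N, ∑ m ∈ range N,
            (zce N (2 * (u - v) * d)) ^ m * zce N ((d:ℤ) * ((u - v) * (d + c) + 2 * B)) := by
          rw [Finset.sum_comm]
          refine Finset.sum_congr rfl fun d _ => Finset.sum_congr rfl fun m _ => ?_
          rw [hkey, zce_add N hN0, ← zce_pow]
      _ = ∑ d ∈ range N, (∑ m ∈ range N, (zce N (2 * (u - v) * d)) ^ m)
            * zce N ((d:ℤ) * ((u - v) * (d + c) + 2 * B)) := by
          refine Finset.sum_congr rfl fun d _ => ?_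
          rw [Finset.sum_mul]
      _ = (N : ℂ) := by
          rw [Finset.sum_eq_single_of_mem 0 (Finset.mem_range.mpr (by omega))]
          · simp [zce_zero]
          · intro d hd hd0
            have hdlt := Finset.mem_range.mp hd
            have hndvd : ¬ (2 * (N : ℤ)) ∣ (2 * (u - v) * d) := by
              intro ⟨t, ht⟩
              have h6 : (u - v) * d = N * t := by linarith
              have h7 : (N : ℤ) ∣ (u - v) * d := ⟨t, h6⟩
              have hcop : IsCoprime ((N : ℤ)) (u - v) :=
                (Int.isCoprime_iff_gcd_eq_one.mpr huv).symm
              have h8 : (N : ℤ) ∣ (d : ℤ) := hcop.dvd_of_dvd_mul_left h7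
              have h9 : (N : ℤ) ≤ (d : ℤ) :=
                Int.le_of_dvd (by exact_mod_cast Nat.pos_of_ne_zero hd0) h8
              omega
            have hω1 : zce N (2 * (u - v) * d) ≠ 1 := zce_ne_one N hN _ hndvd
            have hωN : (zce N (2 * (u - v) * d)) ^ N = 1 := by
              rw [← zce_pow,
                show ((2 * (u - v) * (d:ℤ)) * (N:ℕ) : ℤ) = 2 * N * ((u - v) * d) by
                  ring]
              exact zce_two_N N hN0 _
            rw [geom_sum_eq hω1, hωN, sub_self, zero_div, zero_mul]
  have hnsq : Complex.normSq S = (N : ℝ) := by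
    have h10 := hmain
    rw [Complex.mul_conj] at h10
    exact_mod_cast h10
  rw [Complex.norm_def, hnsq]
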